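/- Let B₃ be the braid group on three strands, presented with generators s, t and relation s·t·s = t·s·t, let 𝒯(a₁,…,aₙ) = s^{a₁}·t^{−a₂}·s^{a₃}·⋯ ∈ B₃, and let E = 𝒯(1,−1,1) = s·t·s. Then for all integers a₂, b, and m, the identity 𝒯(−2)·𝒯(0,a₂,b)·E^{2m+1}·𝒯(2) = 𝒯(−2,a₂,b,−2)·E^{2m+1} holds in B₃. -/
import Mathlib


/-- The single braid relation `s·t·s = t·s·t` for the braid group on three strands,
written as a relator in the free group on two generators. -/
def braidRels : Set (FreeGroup (Fin 2)) :=
  { FreeGroup.of 0 * FreeGroup.of 1 * FreeGroup.of 0 *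
    (FreeGroup.of 1 * FreeGroup.of 0 * FreeGroup.of 1)⁻¹ }

/-- The braid group on three strands, presented with generators `s`, `t`
and the single relation `s·t·s = t·s·t`. -/
abbrev B3 : Type := PresentedGroup braidRels

/-- The first generator `s` of `B₃`. -/
def s : B3 := PresentedGroup.of 0

/-- The second generator `t` of `B₃`. -/
def t : B3 := PresentedGroup.of 1

/-- The half-twist `Δ = s·t·s` (the 3-braid `E = 𝒯(1,−1,1)`). -/
def Δ : B3 := s * t * s

/-- Auxiliary function building `𝒯(a₁,…,aₙ)`: when the flag is `true` the next
entry is a power of `s` (horizontal twists on the top two strands), when `false`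
it is an inverse power of `t`. -/
def Tgo : Bool → List ℤ → B3
  | _, [] => 1
  | true, a :: l => s ^ a * Tgo false l
  | false, a :: l => t ^ (-a) * Tgo true l

/-- The 3-braid `𝒯(a₁,…,aₙ) = s^{a₁} · t^{−a₂} · s^{a₃} · t^{−a₄} · ⋯` in `B₃`. -/
def T (l : List ℤ) : B3 := Tgo true l

/-- The special 3-braid `E = 𝒯(1,−1,1) = s·t·s`. -/
def E : B3 := T [1, -1, 1]

lemma braid : s * t * s = t * s * t := by
  have h : (QuotientGroup.mk (FreeGroup.of 0 * FreeGroup.of 1 * FreeGroup.of 0 *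
      (FreeGroup.of 1 * FreeGroup.of 0 * FreeGroup.of 1)⁻¹) : B3) = 1 := by
    apply (QuotientGroup.eq_one_iff _).2
    exact Subgroup.subset_normalClosure rfl
  have h2 : s * t * s * (t * s * t)⁻¹ = 1 := h
  exact mul_inv_eq_one.mp h2

lemma Δt : Δ * t = s * Δ := by
  show s * t * s * t = s * (s * t * s)
  rw [mul_assoc (s*t) s t, braid]
  group

lemma Δs : Δ * s = t * Δ := by
  show s * t * s * s = t * (s * t * s)
  conv_lhs => rw [braid]
  group

lemma Δsq_s : Commute (Δ ^ 2) s := by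
  show Δ ^ 2 * s = s * Δ ^ 2
  rw [sq, mul_assoc, Δs, ← mul_assoc, Δt, mul_assoc, ← sq]

lemma Δsq_t : Commute (Δ ^ 2) t := by
  show Δ ^ 2 * t = t * Δ ^ 2
  rw [sq, mul_assoc, Δt, ← mul_assoc, Δs, mul_assoc, ← sq]

lemma Δs_pow (n : ℤ) : Δ * s ^ n = t ^ n * Δ := by
  have h' : Δ * s * Δ⁻¹ = t := by rw [Δs]; group
  have h2 : Δ * s ^ n * Δ⁻¹ = t ^ n := by
    rw [← h', ← conj_zpow]
  have := congrArg (· * Δ) h2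
  simpa [mul_assoc] using this

lemma Epow_s_sq (k : ℤ) : E ^ (2 * k + 1) * s ^ (2:ℤ) = t ^ (2:ℤ) * E ^ (2 * k + 1) := by
  have hE : E = Δ := by
    show T [1,-1,1] = s * t * s
    simp [T, Tgo, mul_assoc]
  rw [hE, zpow_add, zpow_mul, zpow_one]
  have hc : Commute ((Δ ^ (2:ℤ)) ^ k) (s ^ (2:ℤ)) := by
    have : Commute (Δ ^ (2:ℤ)) (s ^ (2:ℤ)) := by
      have := Δsq_s
      rw [show ((2:ℤ)) = ((2:ℕ):ℤ) by norm_num, zpow_natCast, zpow_natCast]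
      exact this.pow_right 2
    exact this.zpow_left k
  have hΔ : Δ * s ^ (2:ℤ) = t ^ (2:ℤ) * Δ := Δs_pow 2
  have hc2 : Commute ((Δ ^ (2:ℤ)) ^ k) (t ^ (2:ℤ)) := by
    have : Commute (Δ ^ (2:ℤ)) (t ^ (2:ℤ)) := by
      have := Δsq_t
      rw [show ((2:ℤ)) = ((2:ℕ):ℤ) by norm_num, zpow_natCast, zpow_natCast]
      exact this.pow_right 2
    exact this.zpow_left k
  calc (Δ ^ (2:ℤ)) ^ k * Δ * s ^ (2:ℤ)
      = (Δ ^ (2:ℤ)) ^ k * (t ^ (2:ℤ) * Δ) := by rw [mul_assoc, hΔ]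
    _ = t ^ (2:ℤ) * ((Δ ^ (2:ℤ)) ^ k * Δ) := by rw [← mul_assoc, hc2.eq, mul_assoc]

/-- Case 2, Subcase 2A of the proof of Theorem 3.8: for all integers `a₂`, `b`, `m`,
`𝒯(−2)·𝒯(0,a₂,b)·E^{2m+1}·𝒯(2) = 𝒯(−2,a₂,b,−2)·E^{2m+1}` in `B₃`. -/
theorem gamma2_case2_subcase2A (a₂ b m : ℤ) :
    T [-2] * T [0, a₂, b] * E ^ (2 * m + 1) * T [2] =
      T [-2, a₂, b, -2] * E ^ (2 * m + 1) := by
  have hL : T [-2] * T [0, a₂, b] = s ^ (-2:ℤ) * (t ^ (-a₂) * s ^ b) := by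
    simp [T, Tgo, mul_assoc]
  have hR : T [-2, a₂, b, -2] = s ^ (-2:ℤ) * (t ^ (-a₂) * (s ^ b * t ^ (2:ℤ))) := by
    simp [T, Tgo, mul_assoc]
  have hT2 : T [2] = s ^ (2:ℤ) := by simp [T, Tgo]
  rw [hL, hR, hT2, mul_assoc, mul_assoc, Epow_s_sq m]
  group
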